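/- The eigenvalues of the 4×4 matrix U(ρ)U(ρ)† associated with a Bell decomposable state are λ₁ = λ₂ = A, λ₃ = B+C, λ₄ = B−C, where A = ((p₁−p₂)²+(p₃−p₄)²+(p₅−p₆)²)/4, B = ((p₁+p₂)²+(p₃+p₄)²+(p₅+p₆)²)/4, and C = ((p₁+p₂)(p₃+p₄)+(p₃+p₄)(p₅+p₆)+(p₅+p₆)(p₁+p₂))/4. -/

import Mathlib

noncomputable section
open Matrix ComplexOrder

/-- The standard product basis vector `|ij⟩` of `ℂ²⊗ℂ³ ≅ ℂ⁶`, as a function. -/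
def ket (i : Fin 2) (j : Fin 3) : Fin 2 × Fin 3 → ℂ := fun x => if x = (i, j) then 1 else 0

/-- The six Bell states of `ℂ²⊗ℂ³`, as functions. -/
def bell : Fin 6 → (Fin 2 × Fin 3 → ℂ)
  | 0 => (Real.sqrt 2 : ℂ)⁻¹ • (ket 0 0 + ket 1 1)
  | 1 => (Real.sqrt 2 : ℂ)⁻¹ • (ket 0 0 - ket 1 1)
  | 2 => (Real.sqrt 2 : ℂ)⁻¹ • (ket 0 1 + ket 1 2)
  | 3 => (Real.sqrt 2 : ℂ)⁻¹ • (ket 0 1 - ket 1 2)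
  | 4 => (Real.sqrt 2 : ℂ)⁻¹ • (ket 0 2 + ket 1 0)
  | 5 => (Real.sqrt 2 : ℂ)⁻¹ • (ket 0 2 - ket 1 0)

/-- Outer product `|v⟩⟨w|` as a matrix. -/
def outer (v w : Fin 2 × Fin 3 → ℂ) : Matrix (Fin 2 × Fin 3) (Fin 2 × Fin 3) ℂ :=
  Matrix.vecMulVec v (star w)

/-- The Bell decomposable state `ρ = Σᵢ pᵢ |ψᵢ⟩⟨ψᵢ|`. -/
def ρBD (p : Fin 6 → ℝ) : Matrix (Fin 2 × Fin 3) (Fin 2 × Fin 3) ℂ :=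
  ∑ i, (p i : ℂ) • outer (bell i) (bell i)

/-- The realignment `U(ρ)`: `⟨E_{ij}|U(ρ)|E_{kl}⟩ = ⟨ik|ρ|jl⟩`, as a matrix with
rows indexed by `Fin 2 × Fin 2` and columns by `Fin 3 × Fin 3`. -/
def realign (M : Matrix (Fin 2 × Fin 3) (Fin 2 × Fin 3) ℂ) :
    Matrix (Fin 2 × Fin 2) (Fin 3 × Fin 3) ℂ :=
  fun ij kl => M (ij.1, kl.1) (ij.2, kl.2)

section aux
variable {α : Type*}
lemma cv6_2 (a0 a1 a2 a3 a4 a5 : α) : ![a0,a1,a2,a3,a4,a5] 2 = a2 := rfl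
lemma cv6_3 (a0 a1 a2 a3 a4 a5 : α) : ![a0,a1,a2,a3,a4,a5] 3 = a3 := rfl
lemma cv6_4 (a0 a1 a2 a3 a4 a5 : α) : ![a0,a1,a2,a3,a4,a5] 4 = a4 := rfl
lemma cv6_5 (a0 a1 a2 a3 a4 a5 : α) : ![a0,a1,a2,a3,a4,a5] 5 = a5 := rfl
lemma cv4_2 (a0 a1 a2 a3 : α) : ![a0,a1,a2,a3] 2 = a2 := rfl
lemma cv4_3 (a0 a1 a2 a3 : α) : ![a0,a1,a2,a3] 3 = a3 := rfl
lemma cv4_cs2 (a0 a1 a2 a3 : α) : ![a0,a1,a2,a3] (Fin.castSucc 2) = a2 := rfl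
lemma cvc6 (x : α) (u : Fin 5 → α) : Matrix.vecCons x u 5 = u 4 := rfl
lemma cvc5 (x : α) (u : Fin 4 → α) : Matrix.vecCons x u 4 = u 3 := rfl
lemma cvc4 (x : α) (u : Fin 3 → α) : Matrix.vecCons x u 3 = u 2 := rfl
lemma cvc3 (x : α) (u : Fin 2 → α) : Matrix.vecCons x u 2 = u 1 := rfl
lemma vecHead_const {n : ℕ} (x : α) : Matrix.vecHead (fun _ : Fin (n+1) => x) = x := rfl
lemma vecTail_const {n : ℕ} (x : α) : Matrix.vecTail (fun _ : Fin (n+2) => x) = fun _ => x := rfl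
end aux

lemma sqrt2_inv_sq : ((Real.sqrt 2 : ℝ) : ℂ)⁻¹ * ((Real.sqrt 2 : ℝ) : ℂ)⁻¹ = (2:ℂ)⁻¹ := by
  rw [← mul_inv, ← Complex.ofReal_mul, Real.mul_self_sqrt (by norm_num)]
  norm_num

/-- explicit form of `ρBD` as a 6×6 matrix, rows ordered (0,0),(0,1),(0,2),(1,0),(1,1),(1,2) -/
def Rmat (p : Fin 6 → ℝ) : Matrix (Fin 6) (Fin 6) ℂ :=
  !![((p 0 : ℂ)+p 1)/2, 0, 0, 0, ((p 0 : ℂ)-p 1)/2, 0;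
     0, ((p 2 : ℂ)+p 3)/2, 0, 0, 0, ((p 2 : ℂ)-p 3)/2;
     0, 0, ((p 4 : ℂ)+p 5)/2, ((p 4 : ℂ)-p 5)/2, 0, 0;
     0, 0, ((p 4 : ℂ)-p 5)/2, ((p 4 : ℂ)+p 5)/2, 0, 0;
     ((p 0 : ℂ)-p 1)/2, 0, 0, 0, ((p 0 : ℂ)+p 1)/2, 0;
     0, ((p 2 : ℂ)-p 3)/2, 0, 0, 0, ((p 2 : ℂ)+p 3)/2]

def e23 : Fin 2 × Fin 3 → Fin 6 := fun x => finProdFinEquiv x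

set_option maxHeartbeats 4000000 in
lemma ρBD_eq (p : Fin 6 → ℝ) : ρBD p = (Rmat p).submatrix e23 e23 := by
  ext ⟨i, a⟩ ⟨j, b⟩
  fin_cases i <;> fin_cases a <;> fin_cases j <;> fin_cases b <;>
    · simp (config := { decide := true }) [ρBD, outer, bell, ket, Fin.sum_univ_six,
        vecMulVec_apply, Matrix.sum_apply, Prod.ext_iff, Rmat, e23, finProdFinEquiv,
        Matrix.submatrix_apply, cv6_2, cv6_3, cv6_4, cv6_5, cvc6, cvc5, cvc4, cvc3, vecHead_const, vecTail_const, map_ofNat]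
      try rw [sqrt2_inv_sq]
      try ring

def M4 (p : Fin 6 → ℝ) : Matrix (Fin 4) (Fin 4) ℂ :=
  let a : ℂ := ((p 0 : ℂ)+p 1)/2
  let b : ℂ := ((p 2 : ℂ)+p 3)/2
  let c : ℂ := ((p 4 : ℂ)+p 5)/2
  let x : ℂ := ((p 0 : ℂ)-p 1)/2
  let y : ℂ := ((p 2 : ℂ)-p 3)/2
  let z : ℂ := ((p 4 : ℂ)-p 5)/2
  !![a*a+b*b+c*c, 0, 0, a*b+b*c+c*a;
     0, x*x+y*y+z*z, 0, 0;
     0, 0, x*x+y*y+z*z, 0;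
     a*b+b*c+c*a, 0, 0, a*a+b*b+c*c]

def e22 : Fin 2 × Fin 2 → Fin 4 := fun x => finProdFinEquiv x

set_option maxHeartbeats 4000000 in
lemma N_eq (p : Fin 6 → ℝ) :
    realign (ρBD p) * (realign (ρBD p))ᴴ = (M4 p).submatrix e22 e22 := by
  rw [ρBD_eq]
  ext ⟨i, j⟩ ⟨k, l⟩
  fin_cases i <;> fin_cases j <;> fin_cases k <;> fin_cases l <;>
    · simp (config := { decide := true }) [Matrix.mul_apply, Fintype.sum_prod_type,
        Fin.sum_univ_three, realign, Rmat, M4, e22, e23, finProdFinEquiv,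
        Matrix.submatrix_apply, Matrix.conjTranspose_apply,
        cv6_2, cv6_3, cv6_4, cv6_5, cv4_2, cv4_3, cvc6, cvc5, cvc4, cvc3, vecHead_const, vecTail_const, map_ofNat]
      try ring_nf
      try push_cast
      try ring

open Polynomial in
set_option maxHeartbeats 1000000 in
lemma charpoly4 (S T Q : ℂ) :
    (!![S,0,0,T;0,Q,0,0;0,0,Q,0;T,0,0,S]).charpoly =
      (X - C Q)^2 * (X - C (S+T)) * (X - C (S-T)) := by
  have hcm : charmatrix !![S, 0, 0, T; 0, Q, 0, 0; 0, 0, Q, 0; T, 0, 0, S] =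
      !![X - C S, 0, 0, -C T; 0, X - C Q, 0, 0; 0, 0, X - C Q, 0; -C T, 0, 0, X - C S] := by
    ext i j
    fin_cases i <;> fin_cases j <;>
      simp [charmatrix_apply, Matrix.diagonal, cv4_2, cv4_3, Matrix.vecHead, Matrix.vecTail]
  rw [Matrix.charpoly, hcm]
  simp [Matrix.det_succ_row_zero, Fin.sum_univ_succ, Matrix.det_fin_three, cv4_cs2, cv4_2, cv4_3]
  simp only [show (Fin.succAbove 3 2 : Fin 4) = 2 from rfl, cv4_2]
  ring

open Polynomial in
/-- The eigenvalues of the `4×4` matrix `U(ρ)U(ρ)†` are `A, A, B+C, B−C`. -/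
theorem realign_eigenvalues (p : Fin 6 → ℝ) (hp : ∀ i, 0 ≤ p i)
    (hsum : ∑ i, p i = 1) :
    let A : ℝ := ((p 0 - p 1)^2 + (p 2 - p 3)^2 + (p 4 - p 5)^2) / 4
    let B : ℝ := ((p 0 + p 1)^2 + (p 2 + p 3)^2 + (p 4 + p 5)^2) / 4
    let C : ℝ := ((p 0 + p 1) * (p 2 + p 3) + (p 2 + p 3) * (p 4 + p 5)
      + (p 4 + p 5) * (p 0 + p 1)) / 4
    (realign (ρBD p) * (realign (ρBD p))ᴴ).charpoly =
      (X - Polynomial.C ((A : ℂ)))^2 * (X - Polynomial.C ((B + C : ℝ) : ℂ))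
        * (X - Polynomial.C ((B - C : ℝ) : ℂ)) := by
  intro A B C
  rw [N_eq]
  rw [show (M4 p).submatrix e22 e22
      = Matrix.reindex (finProdFinEquiv (m := 2) (n := 2)).symm finProdFinEquiv.symm (M4 p)
      from rfl]
  rw [Matrix.charpoly_reindex]
  set a : ℂ := ((p 0 : ℂ)+p 1)/2 with ha
  set b : ℂ := ((p 2 : ℂ)+p 3)/2 with hb
  set c : ℂ := ((p 4 : ℂ)+p 5)/2 with hc
  set x : ℂ := ((p 0 : ℂ)-p 1)/2 with hx
  set y : ℂ := ((p 2 : ℂ)-p 3)/2 with hy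
  set z : ℂ := ((p 4 : ℂ)-p 5)/2 with hz
  have hM : M4 p = !![a*a+b*b+c*c, 0, 0, a*b+b*c+c*a;
     0, x*x+y*y+z*z, 0, 0;
     0, 0, x*x+y*y+z*z, 0;
     a*b+b*c+c*a, 0, 0, a*a+b*b+c*c] := rfl
  rw [hM, charpoly4]
  have h1 : (x*x+y*y+z*z : ℂ) = ((A : ℝ) : ℂ) := by
    simp only [hx, hy, hz, A]; push_cast; ring
  have h2 : ((a*a+b*b+c*c) + (a*b+b*c+c*a) : ℂ) = ((B + C : ℝ) : ℂ) := by
    simp only [ha, hb, hc, B, C]; push_cast; ring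
  have h3 : ((a*a+b*b+c*c) - (a*b+b*c+c*a) : ℂ) = ((B - C : ℝ) : ℂ) := by
    simp only [ha, hb, hc, B, C]; push_cast; ring
  rw [h1, h2, h3]
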